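/- With parameters a = b = 0, c = -0.4, α = 1, R = 1.3, the ray tracing map γ maps the spherical cap D = {(m_x, m_z) ∈ S² : |m_x| ≤ 0.8, m_z < 0} onto the disk T = {x ∈ ℝ² : |x| ≤ 17/9}; in particular the boundary circle |m_x| = 0.8, m_z = -0.6 is mapped to the circle of radius 17/9 = 1.888... in ℝ². -/

import Mathlib

set_option maxHeartbeats 1000000


/-- With `a = b = 0`, `c = -0.4`, `α = 1`, `R = 1.3`, the ray tracing map
`γ(m) = -(2ρ(m)/(0.9 - ρ(m)(1+m_z)))·m_x` with `ρ(m) = 0.765/(1.3 + 0.4 m_z)` maps the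
spherical cap `D = {(m_x, m_z) ∈ S² : |m_x| ≤ 0.8, m_z < 0}` onto the closed disk of radius
`17/9`; in particular the boundary circle `|m_x| = 0.8`, `m_z = -0.6` is mapped to the circle
of radius `17/9`. -/
theorem ray_tracing_map_cap_onto_disk :
    ({y : ℝ × ℝ | ∃ mx₁ mx₂ mz : ℝ,
        mx₁ ^ 2 + mx₂ ^ 2 + mz ^ 2 = 1 ∧ mx₁ ^ 2 + mx₂ ^ 2 ≤ (0.8 : ℝ) ^ 2 ∧ mz < 0 ∧
        y = (-(2 * (0.765 / (1.3 + 0.4 * mz)) /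
              (0.9 - (0.765 / (1.3 + 0.4 * mz)) * (1 + mz))) * mx₁,
             -(2 * (0.765 / (1.3 + 0.4 * mz)) /
              (0.9 - (0.765 / (1.3 + 0.4 * mz)) * (1 + mz))) * mx₂)} =
      {y : ℝ × ℝ | y.1 ^ 2 + y.2 ^ 2 ≤ (17 / 9 : ℝ) ^ 2}) ∧
    (∀ mx₁ mx₂ : ℝ, mx₁ ^ 2 + mx₂ ^ 2 = (0.8 : ℝ) ^ 2 →
      (-(2 * (0.765 / (1.3 + 0.4 * (-0.6 : ℝ))) /
          (0.9 - (0.765 / (1.3 + 0.4 * (-0.6 : ℝ))) * (1 + (-0.6 : ℝ)))) * mx₁) ^ 2 +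
      (-(2 * (0.765 / (1.3 + 0.4 * (-0.6 : ℝ))) /
          (0.9 - (0.765 / (1.3 + 0.4 * (-0.6 : ℝ))) * (1 + (-0.6 : ℝ)))) * mx₂) ^ 2 =
        (17 / 9 : ℝ) ^ 2) := by
  constructor
  · ext y
    simp only [Set.mem_setOf_eq]
    constructor
    · rintro ⟨mx₁, mx₂, mz, h1, h2, h3, rfl⟩
      have hmz1 : (-1 : ℝ) ≤ mz := by nlinarith
      have hmz2 : mz ≤ -0.6 := by nlinarith
      have hd : (1.3 + 0.4 * mz : ℝ) ≠ 0 := by intro h; linarith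
      have h1mz : (1 : ℝ) - mz > 0 := by linarith
      have hd2 : (0.9 - (0.765 / (1.3 + 0.4 * mz)) * (1 + mz) : ℝ) ≠ 0 := by
        have : (0.9 - (0.765 / (1.3 + 0.4 * mz)) * (1 + mz) : ℝ)
            = 0.405 * (1 - mz) / (1.3 + 0.4 * mz) := by field_simp; ring
        rw [this]
        positivity
      have hk : -(2 * (0.765 / (1.3 + 0.4 * mz)) /
            (0.9 - (0.765 / (1.3 + 0.4 * mz)) * (1 + mz)))
          = -(34 / 9) / (1 - mz) := by
        field_simp
        have hden : ((1.3 + 0.4 * mz) * 0.9 - 0.765 * (1 + mz) : ℝ) = 0.405 * (1 - mz) := by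
          ring
        rw [hden, neg_eq_iff_eq_neg, neg_neg, div_eq_iff (by positivity : (0.405 : ℝ) * (1 - mz) ≠ 0)]
        ring
      simp only [hk]
      have hxx : mx₁ ^ 2 + mx₂ ^ 2 = (1 - mz) * (1 + mz) := by nlinarith
      have key : ((-(34 / 9) / (1 - mz) * mx₁) ^ 2 + (-(34 / 9) / (1 - mz) * mx₂) ^ 2)
            * (1 - mz) ^ 2 = (34 / 9) ^ 2 * (mx₁ ^ 2 + mx₂ ^ 2) := by
        field_simp
      nlinarith [key, hxx, mul_pos h1mz h1mz, hmz2, sq_nonneg (1 - mz)]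
    · intro hy
      obtain ⟨s, hs⟩ : ∃ s : ℝ, s = (y.1 ^ 2 + y.2 ^ 2) * (9 / 34) ^ 2 := ⟨_, rfl⟩
      have hs0 : 0 ≤ s := by rw [hs]; positivity
      have hs1 : s ≤ 1 / 4 := by rw [hs]; nlinarith
      have hsp : (0 : ℝ) < s + 1 := by linarith
      obtain ⟨mz, hmzdef⟩ : ∃ mz : ℝ, mz = (s - 1) / (s + 1) := ⟨_, rfl⟩
      have hm1 : (-1 : ℝ) ≤ mz := by
        rw [hmzdef, le_div_iff₀ hsp]; linarith
      have hm2 : mz ≤ -0.6 := by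
        rw [hmzdef, div_le_iff₀ hsp]; linarith
      have h1mz : (1 : ℝ) - mz > 0 := by linarith
      have hy2 : y.1 ^ 2 + y.2 ^ 2 = s * (1156 / 81) := by rw [hs]; ring
      have hkey : (81 / 1156 : ℝ) * (1 - mz) ^ 2 * (y.1 ^ 2 + y.2 ^ 2)
          = (1 - mz) * (1 + mz) := by
        rw [hy2, hmzdef]
        field_simp
        ring
      refine ⟨-(9 / 34) * (1 - mz) * y.1, -(9 / 34) * (1 - mz) * y.2, mz, ?_, ?_, ?_, ?_⟩
      · linear_combination hkey
      · nlinarith [hkey, hm1, hm2]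
      · linarith
      · have hd : (1.3 + 0.4 * mz : ℝ) ≠ 0 := by intro h; linarith
        have hd2 : (0.9 - (0.765 / (1.3 + 0.4 * mz)) * (1 + mz) : ℝ) ≠ 0 := by
          have : (0.9 - (0.765 / (1.3 + 0.4 * mz)) * (1 + mz) : ℝ)
              = 0.405 * (1 - mz) / (1.3 + 0.4 * mz) := by field_simp; ring
          rw [this]
          positivity
        have hk : -(2 * (0.765 / (1.3 + 0.4 * mz)) /
              (0.9 - (0.765 / (1.3 + 0.4 * mz)) * (1 + mz)))
            = -(34 / 9) / (1 - mz) := by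
          field_simp
          have hden : ((1.3 + 0.4 * mz) * 0.9 - 0.765 * (1 + mz) : ℝ) = 0.405 * (1 - mz) := by
            ring
          rw [hden, neg_eq_iff_eq_neg, neg_neg, div_eq_iff (by positivity : (0.405 : ℝ) * (1 - mz) ≠ 0)]
          ring
        simp only [hk]
        have e1 : -(34 / 9) / (1 - mz) * (-(9 / 34) * (1 - mz) * y.1) = y.1 := by
          field_simp
        have e2 : -(34 / 9) / (1 - mz) * (-(9 / 34) * (1 - mz) * y.2) = y.2 := by
          field_simp
        rw [e1, e2]
  · intro mx₁ mx₂ h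
    norm_num
    nlinarith
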